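/- Fix ε ∈ ℝ and let f : ℝ² → ℝ be f(x,y) = (ε/2)(x² − y²) + (1/2)(x²y − y³) (the D₄⁻ flat-umbilic family). Then: (i) f_xx(x,y)·f_yy(x,y) − f_xy(x,y)² = 0 if and only if (3y + 2ε)² + 3x² = ε² (for ε ≠ 0, an ellipse: the parabolic curve); (ii) with a^f(x,y,p) = (ε + y) + 2xp − (ε + 3y)p² and I(x,y,p) = (a^f)_x + p·(a^f)_y, one has I(x,y,p) = 3p(1 − p²), and the set {(x,y) ∈ ℝ² : ∃ p ∈ ℝ, a^f(x,y,p) = 0 and I(x,y,p) = 0} is exactly the union of the three lines {y = −ε} ∪ {y = x} ∪ {y = −x} (the flecnodal curve, one line for each of p = 0, 1, −1). -/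

import Mathlib

noncomputable section

/-- Partial derivative in the first variable of a function on `ℝ × ℝ`. -/
def pdx (f : ℝ × ℝ → ℝ) (q : ℝ × ℝ) : ℝ := deriv (fun t => f (t, q.2)) q.1

/-- Partial derivative in the second variable of a function on `ℝ × ℝ`. -/
def pdy (f : ℝ × ℝ → ℝ) (q : ℝ × ℝ) : ℝ := deriv (fun t => f (q.1, t)) q.2

/-- Partial derivative in `x` of a function on `ℝ × ℝ × ℝ` (coordinates `(x, y, p)`). -/
def pDx (F : ℝ × ℝ × ℝ → ℝ) (q : ℝ × ℝ × ℝ) : ℝ := deriv (fun t => F (t, q.2.1, q.2.2)) q.1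

/-- Partial derivative in `y` of a function on `ℝ × ℝ × ℝ` (coordinates `(x, y, p)`). -/
def pDy (F : ℝ × ℝ × ℝ → ℝ) (q : ℝ × ℝ × ℝ) : ℝ := deriv (fun t => F (q.1, t, q.2.2)) q.2.1

/-- Partial derivative in `p` of a function on `ℝ × ℝ × ℝ` (coordinates `(x, y, p)`). -/
def pDp (F : ℝ × ℝ × ℝ → ℝ) (q : ℝ × ℝ × ℝ) : ℝ := deriv (fun t => F (q.1, q.2.1, t)) q.2.2

/-- The asymptotic IDE function `a^f(x,y,p) = f_xx + 2 f_xy p + f_yy p²`. -/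
def aIDE (f : ℝ × ℝ → ℝ) (q : ℝ × ℝ × ℝ) : ℝ :=
  pdx (pdx f) (q.1, q.2.1) + 2 * pdy (pdx f) (q.1, q.2.1) * q.2.2
    + pdy (pdy f) (q.1, q.2.1) * q.2.2 ^ 2

/-- The inflection function `I^F(x,y,p) = F_x + p·F_y`; its zero set is the flec-surface. -/
def inflFun (F : ℝ × ℝ × ℝ → ℝ) (q : ℝ × ℝ × ℝ) : ℝ := pDx F q + q.2.2 * pDy F q

/-- Derivative of a cubic polynomial. -/
lemma cubicD (a b c d x : ℝ) :
    deriv (fun t : ℝ => a * t ^ 3 + b * t ^ 2 + c * t + d) x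
      = 3 * a * x ^ 2 + 2 * b * x + c := by
  have h : HasDerivAt (fun t : ℝ => a * t ^ 3 + b * t ^ 2 + c * t + d)
      (3 * a * x ^ 2 + 2 * b * x + c) x := by
    have h3 := (hasDerivAt_pow 3 x).const_mul a
    have h2 := (hasDerivAt_pow 2 x).const_mul b
    have h1 := (hasDerivAt_id x).const_mul c
    have := ((h3.add h2).add h1).add_const d
    exact this.congr_deriv (by push_cast; ring)
  exact h.deriv

/-- Theorem 5(a), the `D₄⁻` flat-umbilic family: for
`f(x,y) = (ε/2)(x² − y²) + (1/2)(x²y − y³)`: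
(i) the parabolic curve is `(3y + 2ε)² + 3x² = ε²`;
(ii) `a^f(x,y,p) = (ε + y) + 2xp − (ε + 3y)p²`, the inflection function is
`I = 3p(1 − p²)`, and the flecnodal curve is the union of the three lines
`{y = −ε} ∪ {y = x} ∪ {y = −x}` (one for each of `p = 0, 1, −1`). -/
theorem D4minus_flat_umbilic (ε : ℝ)
    (f : ℝ × ℝ → ℝ)
    (hf : ∀ x y : ℝ, f (x, y) =
      ε / 2 * (x ^ 2 - y ^ 2) + 1 / 2 * (x ^ 2 * y - y ^ 3)) :
    (∀ x y : ℝ,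
      (pdx (pdx f) (x, y) * pdy (pdy f) (x, y) - (pdy (pdx f) (x, y)) ^ 2 = 0 ↔
        (3 * y + 2 * ε) ^ 2 + 3 * x ^ 2 = ε ^ 2)) ∧
    (∀ x y p : ℝ, aIDE f (x, y, p) = (ε + y) + 2 * x * p - (ε + 3 * y) * p ^ 2) ∧
    (∀ x y p : ℝ, inflFun (aIDE f) (x, y, p) = 3 * p * (1 - p ^ 2)) ∧
    ({q : ℝ × ℝ | ∃ p : ℝ, aIDE f (q.1, q.2, p) = 0 ∧
        inflFun (aIDE f) (q.1, q.2, p) = 0} =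
      {q : ℝ × ℝ | q.2 = -ε} ∪ {q : ℝ × ℝ | q.2 = q.1} ∪ {q : ℝ × ℝ | q.2 = -q.1}) := by
  -- first partials
  have hfx : ∀ x y : ℝ, pdx f (x, y) = ε * x + x * y := by
    intro x y
    show deriv (fun t => f (t, y)) x = _
    have he : (fun t => f (t, y)) = fun t : ℝ =>
        0 * t ^ 3 + ((ε + y) / 2) * t ^ 2 + 0 * t + (-(ε / 2) * y ^ 2 - 1 / 2 * y ^ 3) :=
      funext fun t => by rw [hf]; ring
    rw [he, cubicD]; ring
  have hfy : ∀ x y : ℝ, pdy f (x, y) = -ε * y + x ^ 2 / 2 - 3 / 2 * y ^ 2 := by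
    intro x y
    show deriv (fun t => f (x, t)) y = _
    have he : (fun t => f (x, t)) = fun t : ℝ =>
        (-(1 : ℝ) / 2) * t ^ 3 + (-(ε / 2)) * t ^ 2 + (x ^ 2 / 2) * t + (ε / 2 * x ^ 2) :=
      funext fun t => by rw [hf]; ring
    rw [he, cubicD]; ring
  -- second partials
  have hfxx : ∀ x y : ℝ, pdx (pdx f) (x, y) = ε + y := by
    intro x y
    show deriv (fun t => pdx f (t, y)) x = _
    have he : (fun t => pdx f (t, y)) = fun t : ℝ =>
        0 * t ^ 3 + 0 * t ^ 2 + (ε + y) * t + 0 :=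
      funext fun t => by rw [hfx]; ring
    rw [he, cubicD]; ring
  have hfxy : ∀ x y : ℝ, pdy (pdx f) (x, y) = x := by
    intro x y
    show deriv (fun t => pdx f (x, t)) y = _
    have he : (fun t => pdx f (x, t)) = fun t : ℝ =>
        0 * t ^ 3 + 0 * t ^ 2 + x * t + ε * x :=
      funext fun t => by rw [hfx]; ring
    rw [he, cubicD]; ring
  have hfyy : ∀ x y : ℝ, pdy (pdy f) (x, y) = -ε - 3 * y := by
    intro x y
    show deriv (fun t => pdy f (x, t)) y = _
    have he : (fun t => pdy f (x, t)) = fun t : ℝ =>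
        0 * t ^ 3 + (-(3 : ℝ) / 2) * t ^ 2 + (-ε) * t + x ^ 2 / 2 :=
      funext fun t => by rw [hfy]; ring
    rw [he, cubicD]; ring
  -- aIDE formula
  have ha : ∀ x y p : ℝ, aIDE f (x, y, p) = (ε + y) + 2 * x * p - (ε + 3 * y) * p ^ 2 := by
    intro x y p
    show pdx (pdx f) (x, y) + 2 * pdy (pdx f) (x, y) * p + pdy (pdy f) (x, y) * p ^ 2 = _
    rw [hfxx, hfxy, hfyy]; ring
  -- inflection function
  have hI : ∀ x y p : ℝ, inflFun (aIDE f) (x, y, p) = 3 * p * (1 - p ^ 2) := by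
    intro x y p
    have hDx : pDx (aIDE f) (x, y, p) = 2 * p := by
      show deriv (fun t => aIDE f (t, y, p)) x = _
      have he : (fun t => aIDE f (t, y, p)) = fun t : ℝ =>
          0 * t ^ 3 + 0 * t ^ 2 + (2 * p) * t + ((ε + y) - (ε + 3 * y) * p ^ 2) :=
        funext fun t => by rw [ha]; ring
      rw [he, cubicD]; ring
    have hDy : pDy (aIDE f) (x, y, p) = 1 - 3 * p ^ 2 := by
      show deriv (fun t => aIDE f (x, t, p)) y = _
      have he : (fun t => aIDE f (x, t, p)) = fun t : ℝ =>
          0 * t ^ 3 + 0 * t ^ 2 + (1 - 3 * p ^ 2) * t + (ε + 2 * x * p - ε * p ^ 2) :=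
        funext fun t => by rw [ha]; ring
      rw [he, cubicD]; ring
    show pDx (aIDE f) (x, y, p) + p * pDy (aIDE f) (x, y, p) = _
    rw [hDx, hDy]; ring
  refine ⟨?_, ha, hI, ?_⟩
  · intro x y
    rw [hfxx, hfxy, hfyy]
    constructor <;> intro h <;> nlinarith [h]
  · ext ⟨x, y⟩
    simp only [Set.mem_setOf_eq, Set.mem_union]
    constructor
    · rintro ⟨p, hap, hip⟩
      rw [hI] at hip
      rw [ha] at hap
      have h3 : p * ((1 - p) * (1 + p)) = 0 := by nlinarith [hip]
      rcases mul_eq_zero.mp h3 with h | h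
      · subst h; left; left; nlinarith [hap]
      · rcases mul_eq_zero.mp h with h | h
        · have hp : p = 1 := by linarith
          subst hp; left; right; nlinarith [hap]
        · have hp : p = -1 := by linarith
          subst hp; right; nlinarith [hap]
    · rintro ((h | h) | h)
      · exact ⟨0, by rw [ha]; simp [h], by rw [hI]; ring⟩
      · exact ⟨1, by rw [ha, h]; ring, by rw [hI]; ring⟩
      · exact ⟨-1, by rw [ha, h]; ring, by rw [hI]; ring⟩
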